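/- Let G = (N, T, P, S) be a context-free grammar all of whose nonterminals are useful, and let x ∈ ℕ^P with x_p ≥ 1 for every production p solve the homogeneous Esparza–Euler–Kirchhoff equation Φ_N·x = 0. Then there is a production sequence σ ∈ P* with Ψ_P(σ) = x and a derivation S ⇒^σ α such that the resulting sentential form contains exactly one nonterminal occurrence, namely S: that is, α = w₁.S.w₂ for some terminal words w₁, w₂ ∈ T*. -/

import Mathlib

/-!
# Statement 6: realizing homogeneous Esparza–Euler–Kirchhoff solutions as derivations

If all nonterminals of the grammar are useful and `x ∈ ℕ^P` with `x ≥ 1` solves the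
homogeneous Esparza–Euler–Kirchhoff equation `Φ_N·x = 0`, then there is a production
sequence `σ` with `Ψ_P(σ) = x` and a derivation `S ⇒^σ w₁.S.w₂` whose resulting
sentential form contains exactly one nonterminal occurrence, namely `S`.
-/

namespace EEK

variable {N T P : Type}

/-- `DerivesBy lhs rhs σ α β` formalizes `α ⇒^σ β`: the sequence `σ` of productions is
applied, each rewriting one occurrence of a nonterminal. -/
inductive DerivesBy (lhs : P → N) (rhs : P → List (N ⊕ T)) :
    List P → List (N ⊕ T) → List (N ⊕ T) → Prop
  | refl (α : List (N ⊕ T)) : DerivesBy lhs rhs [] α α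
  | step {p : P} {α β γ : List (N ⊕ T)} {σ : List P} (l r : List (N ⊕ T)) :
      α = l ++ Sum.inl (lhs p) :: r → β = l ++ rhs p ++ r →
      DerivesBy lhs rhs σ β γ → DerivesBy lhs rhs (p :: σ) α γ

/-- The derivation relation `⇒*`. -/
def Derives (lhs : P → N) (rhs : P → List (N ⊕ T))
    (α β : List (N ⊕ T)) : Prop :=
  ∃ σ : List P, DerivesBy lhs rhs σ α β

/-- `A` is useful with respect to the start symbol `S`. -/
def Useful (lhs : P → N) (rhs : P → List (N ⊕ T)) (S A : N) : Prop :=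
  ∃ (α₁ α₂ : List (N ⊕ T)) (w : List T),
    Derives lhs rhs [Sum.inl S] (α₁ ++ Sum.inl A :: α₂) ∧
    Derives lhs rhs (α₁ ++ Sum.inl A :: α₂) (w.map Sum.inr)

/-- `eff_N(p)(A)`, the column `p` of the matrix `Φ_N` evaluated at `A`. -/
def effN [DecidableEq N] [DecidableEq T] (lhs : P → N) (rhs : P → List (N ⊕ T))
    (p : P) (A : N) : ℤ :=
  ((rhs p).count (Sum.inl A) : ℤ) - if lhs p = A then 1 else 0

/-- `(Φ_N · x) A`. -/
def phiNmul [Fintype P] [DecidableEq N] [DecidableEq T] (lhs : P → N)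
    (rhs : P → List (N ⊕ T)) (x : P → ℕ) (A : N) : ℤ :=
  ∑ p : P, effN lhs rhs p A * (x p : ℤ)

end EEK

set_option linter.unusedSectionVars false

namespace EEKAux

open EEK

instance sumLawfulBEq {N T : Type} [DecidableEq N] [DecidableEq T] :
    LawfulBEq (N ⊕ T) where
  eq_of_beq {a b} h := by
    cases a <;> cases b
    · exact congrArg Sum.inl (eq_of_beq h)
    · exact Bool.noConfusion h
    · exact Bool.noConfusion h
    · exact congrArg Sum.inr (eq_of_beq h)
  rfl {a} := by
    cases a with
    | inl x => exact beq_self_eq_true x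
    | inr x => exact beq_self_eq_true x

variable {N T P : Type} [Fintype P] [DecidableEq N] [DecidableEq T] [DecidableEq P]

section Defs

variable (lhs : P → N) (rhs : P → List (N ⊕ T))

/-- Number of occurrences of nonterminal `A` on the right side of `p`. -/
def cntN (p : P) (A : N) : ℕ := (rhs p).count (Sum.inl A)

/-- Result of firing production `p` on a multiset of nonterminals. -/
def stepFn (m : N → ℕ) (p : P) : N → ℕ :=
  fun A => (if lhs p = A then m A - 1 else m A) + cntN rhs p A

/-- Decrement budget at `q`. -/
def decY (y : P → ℕ) (q : P) : P → ℕ := fun p => y p - if p = q then 1 else 0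

/-- Edge relation of the support graph. -/
def EdgeRel (y : P → ℕ) (a b : N) : Prop :=
  ∃ p, y p ≠ 0 ∧ lhs p = a ∧ cntN rhs p b ≠ 0

def ReachFrom (m : N → ℕ) (y : P → ℕ) (v : N) : Prop :=
  ∃ u, m u ≠ 0 ∧ Relation.ReflTransGen (EdgeRel lhs rhs y) u v

def Conn (m : N → ℕ) (y : P → ℕ) : Prop :=
  ∀ p, y p ≠ 0 → ReachFrom lhs rhs m y (lhs p)

def Balance (m : N → ℕ) (y : P → ℕ) (t : N → ℕ) : Prop :=
  ∀ A, m A + ∑ p, y p * cntN rhs p A = t A + ∑ p, (if lhs p = A then y p else 0)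

/-- Multiset run. -/
inductive MRun : (N → ℕ) → List P → (N → ℕ) → Prop
  | nil (m : N → ℕ) : MRun m [] m
  | cons {m : N → ℕ} {σ : List P} {t' : N → ℕ} (p : P) (h : m (lhs p) ≠ 0)
      (h' : MRun (stepFn lhs rhs m p) σ t') : MRun m (p :: σ) t'

end Defs

variable {lhs : P → N} {rhs : P → List (N ⊕ T)}

lemma decY_ne {y : P → ℕ} {q p : P} (h : p ≠ q) : decY y q p = y p := by
  simp [decY, h]

lemma decY_self (y : P → ℕ) (q : P) : decY y q q = y q - 1 := by simp [decY]

lemma y_ne_of_decY {y : P → ℕ} {q p : P} (h : decY y q p ≠ 0) : y p ≠ 0 := by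
  simp only [decY] at h; omega

lemma stepFn_lhs (m : N → ℕ) (q : P) :
    stepFn lhs rhs m q (lhs q) = (m (lhs q) - 1) + cntN rhs q (lhs q) := by
  simp [stepFn]

lemma stepFn_other {q : P} {A : N} (m : N → ℕ) (h : lhs q ≠ A) :
    stepFn lhs rhs m q A = m A + cntN rhs q A := by
  simp [stepFn, h]

/-- Balance is preserved by a step. -/
lemma balance_step {m t : N → ℕ} {y : P → ℕ} {q : P} (hq : y q ≠ 0)
    (hm : m (lhs q) ≠ 0) (hb : Balance lhs rhs m y t) :
    Balance lhs rhs (stepFn lhs rhs m q) (decY y q) t := by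
  intro A
  have h1 : ∑ p, y p * cntN rhs p A
      = ∑ p, decY y q p * cntN rhs p A + cntN rhs q A := by
    have : ∀ p : P, y p * cntN rhs p A
        = decY y q p * cntN rhs p A + (if p = q then cntN rhs p A else 0) := by
      intro p
      by_cases h : p = q
      · subst h
        rw [decY_self, if_pos rfl]
        obtain ⟨k, hk⟩ : ∃ k, y p = k + 1 := ⟨y p - 1, by omega⟩
        rw [hk, Nat.add_sub_cancel, Nat.succ_mul]
      · rw [decY_ne h, if_neg h]
        omega
    rw [Finset.sum_congr rfl (fun p _ => this p), Finset.sum_add_distrib]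
    congr 1
    rw [Finset.sum_ite_eq' Finset.univ q (fun p => cntN rhs p A)]
    simp
  have h2 : ∑ p, (if lhs p = A then y p else 0)
      = ∑ p, (if lhs p = A then decY y q p else 0)
        + (if lhs q = A then 1 else 0) := by
    have : ∀ p : P, (if lhs p = A then y p else 0)
        = (if lhs p = A then decY y q p else 0)
          + (if p = q then (if lhs p = A then 1 else 0) else 0) := by
      intro p
      by_cases h : p = q
      · subst h
        by_cases h' : lhs p = A
        · rw [if_pos h', if_pos h', if_pos rfl, if_pos h', decY_self]
          omega
        · simp [h']
      · rw [decY_ne h, if_neg h]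
        omega
    rw [Finset.sum_congr rfl (fun p _ => this p), Finset.sum_add_distrib]
    congr 1
    rw [Finset.sum_ite_eq' Finset.univ q (fun p => if lhs p = A then 1 else 0)]
    simp
  have hb' := hb A
  rw [h1, h2] at hb'
  by_cases hA : lhs q = A
  · rw [if_pos hA] at hb'
    subst hA
    rw [stepFn_lhs]
    omega
  · rw [if_neg hA] at hb'
    rw [stepFn_other m hA]
    omega

lemma stepFn_ne_of_ne {m : N → ℕ} {q : P} {w : N} (hne : lhs q ≠ w)
    (hw : m w ≠ 0) : stepFn lhs rhs m q w ≠ 0 := by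
  rw [stepFn_other m hne]; omega

lemma stepFn_ne_of_rhs {m : N → ℕ} {q : P} {v : N}
    (hcnt : cntN rhs q v ≠ 0) : stepFn lhs rhs m q v ≠ 0 := by
  by_cases h : lhs q = v
  · subst h; rw [stepFn_lhs]; omega
  · rw [stepFn_other m h]; omega

/-- Path truncation: any path to `u` gives one whose edge sources avoid `u`. -/
lemma rtg_avoid {y : P → ℕ} {u : N} :
    ∀ {v : N}, Relation.ReflTransGen (EdgeRel lhs rhs y) v u →
      v = u ∨ (v ≠ u ∧
        Relation.ReflTransGen (fun a b => EdgeRel lhs rhs y a b ∧ a ≠ u) v u) := by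
  intro v h
  induction h using Relation.ReflTransGen.head_induction_on with
  | refl => exact Or.inl rfl
  | head h' h ih =>
    rename_i a c
    by_cases hau : a = u
    · exact Or.inl hau
    · refine Or.inr ⟨hau, ?_⟩
      rcases ih with hcu | ⟨_, p⟩
      · subst hcu
        exact Relation.ReflTransGen.single ⟨h', hau⟩
      · exact p.head ⟨h', hau⟩

/-- A `u`-source-avoiding path survives decrementing a production with lhs `u`. -/
lemma rtg_avoid_dec {y : P → ℕ} {q : P} {v z : N} (hlq : lhs q = z)
    (h : Relation.ReflTransGen (fun a b => EdgeRel lhs rhs y a b ∧ a ≠ z) v z) :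
    Relation.ReflTransGen (EdgeRel lhs rhs (decY y q)) v z := by
  refine Relation.ReflTransGen.mono ?_ v z h
  rintro a b ⟨⟨s, hs, hlsa, hcnt⟩, hau⟩
  have hsq : s ≠ q := fun h => hau (by rw [← hlsa, h, hlq])
  exact ⟨s, by rw [decY_ne hsq]; exact hs, hlsa, hcnt⟩

/-- Connectivity transfer when `lhs q` stays reachable after the step. -/
lemma conn_step {m : N → ℕ} {y : P → ℕ} {q : P}
    (hc : Conn lhs rhs m y)
    (hu : ReachFrom lhs rhs (stepFn lhs rhs m q) (decY y q) (lhs q)) :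
    Conn lhs rhs (stepFn lhs rhs m q) (decY y q) := by
  intro r hr
  obtain ⟨w, hw, hpath⟩ := hc r (y_ne_of_decY hr)
  have key : ∀ v, Relation.ReflTransGen (EdgeRel lhs rhs y) w v →
      ReachFrom lhs rhs (stepFn lhs rhs m q) (decY y q) v := by
    intro v hv
    induction hv with
    | refl =>
      by_cases hwq : w = lhs q
      · exact hwq ▸ hu
      · exact ⟨w, stepFn_ne_of_ne (fun h => hwq (h.symm)) hw,
          Relation.ReflTransGen.refl⟩
    | @tail b c hp e ih =>
      obtain ⟨s, hs, hlsb, hcnt⟩ := e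
      by_cases hds : decY y q s = 0
      · have hsq : s = q := by
          by_cases h : s = q
          · exact h
          · rw [decY_ne h] at hds; exact absurd hds hs
        exact ⟨c, stepFn_ne_of_rhs (hsq ▸ hcnt), Relation.ReflTransGen.refl⟩
      · obtain ⟨w', hw', p'⟩ := ih
        exact ⟨w', hw', p'.tail ⟨s, hds, hlsb, hcnt⟩⟩
  exact key (lhs r) hpath

/-- Connectivity transfer when no remaining production has lhs `lhs q`. -/
lemma conn_step_last {m : N → ℕ} {y : P → ℕ} {q : P}
    (hc : Conn lhs rhs m y)
    (hC : ∀ r, decY y q r ≠ 0 → lhs r ≠ lhs q) :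
    Conn lhs rhs (stepFn lhs rhs m q) (decY y q) := by
  intro r hr
  have hrq : lhs r ≠ lhs q := hC r hr
  obtain ⟨w, hw, hpath⟩ := hc r (y_ne_of_decY hr)
  have key : ∀ v, Relation.ReflTransGen (EdgeRel lhs rhs y) w v →
      v = lhs q ∨ ReachFrom lhs rhs (stepFn lhs rhs m q) (decY y q) v := by
    intro v hv
    induction hv with
    | refl =>
      by_cases hwq : w = lhs q
      · exact Or.inl hwq
      · exact Or.inr ⟨w, stepFn_ne_of_ne (fun h => hwq h.symm) hw,
          Relation.ReflTransGen.refl⟩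
    | @tail b c hp e ih =>
      obtain ⟨s, hs, hlsb, hcnt⟩ := e
      by_cases hds : decY y q s = 0
      · have hsq : s = q := by
          by_cases h : s = q
          · exact h
          · rw [decY_ne h] at hds; exact absurd hds hs
        exact Or.inr ⟨c, stepFn_ne_of_rhs (hsq ▸ hcnt), Relation.ReflTransGen.refl⟩
      · have hbq : b ≠ lhs q := by
          intro h
          exact (hC s hds) (by rw [hlsb, h])
        rcases ih with h | ⟨w', hw', p'⟩
        · exact absurd h hbq
        · exact Or.inr ⟨w', hw', p'.tail ⟨s, hds, hlsb, hcnt⟩⟩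
  rcases key (lhs r) hpath with h | h
  · exact absurd h hrq
  · exact h

lemma exists_applicable {m : N → ℕ} {y : P → ℕ} (hc : Conn lhs rhs m y)
    {q : P} (hq : y q ≠ 0) : ∃ p, y p ≠ 0 ∧ m (lhs p) ≠ 0 := by
  obtain ⟨w, hw, hpath⟩ := hc q hq
  rcases hpath.cases_head with heq | ⟨v, ⟨s, hs, hls, _⟩, _⟩
  · exact ⟨q, hq, heq ▸ hw⟩
  · exact ⟨s, hs, hls.symm ▸ hw⟩

/-- The Fleury choice: some applicable production preserves connectivity. -/
lemma fleury {m t : N → ℕ} {y : P → ℕ}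
    (hb : Balance lhs rhs m y t) (hc : Conn lhs rhs m y)
    {q₁ : P} (hy : y q₁ ≠ 0) :
    ∃ q, y q ≠ 0 ∧ m (lhs q) ≠ 0 ∧
      Conn lhs rhs (stepFn lhs rhs m q) (decY y q) := by
  by_contra hbad
  push_neg at hbad
  have KEY : ∀ q, y q ≠ 0 → m (lhs q) ≠ 0 →
      (¬ ReachFrom lhs rhs (stepFn lhs rhs m q) (decY y q) (lhs q)) ∧
      (∃ r, decY y q r ≠ 0 ∧ lhs r = lhs q) := by
    intro q h1 h2
    constructor
    · intro hu
      exact hbad q h1 h2 (conn_step hc hu)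
    · by_contra h
      push_neg at h
      exact hbad q h1 h2 (conn_step_last hc h)
  have KEY2 : ∀ q, y q ≠ 0 → m (lhs q) ≠ 0 →
      m (lhs q) = 1 ∧ cntN rhs q (lhs q) = 0 := by
    intro q h1 h2
    have hnr := (KEY q h1 h2).1
    by_contra h
    have hstep : stepFn lhs rhs m q (lhs q) ≠ 0 := by
      rw [stepFn_lhs]
      omega
    exact hnr ⟨lhs q, hstep, Relation.ReflTransGen.refl⟩
  obtain ⟨q₀, hq₀, hm₀⟩ := exists_applicable hc hy
  set u := lhs q₀ with hu_def
  obtain ⟨r₀, hr₀, hlr₀⟩ := (KEY q₀ hq₀ hm₀).2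
  have hm1 : m u = 1 := (KEY2 q₀ hq₀ hm₀).1
  -- consumption of u is at least 2
  have hC2 : 2 ≤ ∑ p, (if lhs p = u then y p else 0) := by
    by_cases hr₀q : r₀ = q₀
    · subst hr₀q
      have : 2 ≤ y r₀ := by
        have h2 := hr₀
        rw [decY_self] at h2
        omega
      calc 2 ≤ y r₀ := this
        _ = (if lhs r₀ = u then y r₀ else 0) := by rw [if_pos hlr₀]
        _ ≤ ∑ p, (if lhs p = u then y p else 0) :=
            Finset.single_le_sum (f := fun p => if lhs p = u then y p else 0)
              (fun p _ => Nat.zero_le _) (Finset.mem_univ r₀)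
    · have hyr₀ : y r₀ ≠ 0 := y_ne_of_decY hr₀
      have hsplit : ∑ p, (if lhs p = u then y p else 0)
          = (if lhs q₀ = u then y q₀ else 0)
            + ∑ p ∈ Finset.univ.erase q₀, (if lhs p = u then y p else 0) := by
        rw [← Finset.sum_erase_add Finset.univ _ (Finset.mem_univ q₀)]
        omega
      have h2 : (if lhs r₀ = u then y r₀ else 0)
          ≤ ∑ p ∈ Finset.univ.erase q₀, (if lhs p = u then y p else 0) :=
        Finset.single_le_sum (f := fun p => if lhs p = u then y p else 0)
          (fun p _ => Nat.zero_le _)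
          (Finset.mem_erase.2 ⟨hr₀q, Finset.mem_univ r₀⟩)
      rw [hsplit, if_pos rfl, if_pos hlr₀] at *
      omega
  -- there is a producer of u
  have hP : ∑ p, y p * cntN rhs p u ≠ 0 := by
    have := hb u
    omega
  obtain ⟨rr, _, hrr⟩ := Finset.exists_ne_zero_of_sum_ne_zero hP
  have hyrr : y rr ≠ 0 := fun h => hrr (by rw [h, Nat.zero_mul])
  have hcrr : cntN rhs rr u ≠ 0 := fun h => hrr (by rw [h, Nat.mul_zero])
  have hlrr : lhs rr ≠ u := by
    intro h
    have happ : m (lhs rr) ≠ 0 := by rw [h, hm1]; omega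
    have := (KEY2 rr hyrr happ).2
    rw [h] at this
    exact hcrr this
  obtain ⟨w, hw, hpath⟩ := hc rr hyrr
  have hpathu : Relation.ReflTransGen (EdgeRel lhs rhs y) w u :=
    hpath.tail ⟨rr, hyrr, rfl, hcrr⟩
  rcases rtg_avoid hpathu with hwu | ⟨hne, hpath'⟩
  · -- w = u : extract a cycle at u
    subst hwu
    rcases hpath.cases_head with heq | ⟨v₁, hedge, hrest⟩
    · exact hlrr heq.symm
    · obtain ⟨qh, hyqh, hlqh, hcv₁⟩ := hedge
      have hmqh : m (lhs qh) ≠ 0 := by rw [hlqh, hm1]; omega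
      have hv₁u : v₁ ≠ u := by
        intro h
        have := (KEY2 qh hyqh hmqh).2
        rw [hlqh] at this
        exact (h ▸ hcv₁) this
      have hrestu : Relation.ReflTransGen (EdgeRel lhs rhs y) v₁ u :=
        hrest.tail ⟨rr, hyrr, rfl, hcrr⟩
      rcases rtg_avoid hrestu with h' | ⟨_, hpath''⟩
      · exact hv₁u h'
      · have hreach : ReachFrom lhs rhs (stepFn lhs rhs m qh) (decY y qh) u :=
          ⟨v₁, by
            have : lhs qh ≠ v₁ := by rw [hlqh]; exact fun h => hv₁u h.symm
            exact stepFn_ne_of_rhs hcv₁,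
           rtg_avoid_dec hlqh hpath''⟩
        exact (KEY qh hyqh hmqh).1 (by rw [hlqh]; exact hreach)
  · -- w ≠ u
    have hreach : ReachFrom lhs rhs (stepFn lhs rhs m q₀) (decY y q₀) u :=
      ⟨w, stepFn_ne_of_ne (fun h => hne h.symm) hw, rtg_avoid_dec rfl hpath'⟩
    exact (KEY q₀ hq₀ hm₀).1 hreach

/-- Main realization lemma for multiset runs. -/
lemma realize (t : N → ℕ) : ∀ (n : ℕ) (y : P → ℕ) (m : N → ℕ),
    (∑ p, y p) = n → Balance lhs rhs m y t → Conn lhs rhs m y →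
    ∃ σ : List P, (∀ p, σ.count p = y p) ∧ MRun lhs rhs m σ t := by
  intro n
  induction n using Nat.strong_induction_on with
  | _ n ih =>
    intro y m hn hb hc
    by_cases hz : ∀ p, y p = 0
    · have hmt : m = t := by
        funext A
        have := hb A
        simp only [hz, Nat.zero_mul, ite_self, Finset.sum_const_zero] at this
        simpa using this
      subst hmt
      exact ⟨[], fun p => by simp [hz], MRun.nil m⟩
    · push_neg at hz
      obtain ⟨q₁, hq₁⟩ := hz
      obtain ⟨q, hq, hmq, hconn'⟩ := fleury hb hc hq₁
      have hb' := balance_step hq hmq hb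
      have hsum : ∑ p, y p = ∑ p, decY y q p + 1 := by
        have : ∀ p : P, y p = decY y q p + (if p = q then 1 else 0) := by
          intro p
          by_cases h : p = q
          · subst h; rw [decY_self, if_pos rfl]; omega
          · rw [decY_ne h, if_neg h]; omega
        rw [Finset.sum_congr rfl (fun p _ => this p), Finset.sum_add_distrib,
          Finset.sum_ite_eq' Finset.univ q (fun _ => 1)]
        simp
      have hlt : ∑ p, decY y q p < n := by omega
      obtain ⟨σ', hcnt, hrun⟩ := ih (∑ p, decY y q p) hlt (decY y q)
        (stepFn lhs rhs m q) rfl hb' hconn'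
      refine ⟨q :: σ', fun p => ?_, MRun.cons q hmq hrun⟩
      rw [List.count_cons, hcnt p]
      by_cases h : p = q
      · subst h
        simp only [decY, if_pos rfl, beq_self_eq_true, if_pos]
        omega
      · have : (q == p) = false := by
          simp [beq_eq_false_iff_ne]
          exact fun hh => h hh.symm
        rw [this, decY_ne h]
        simp

/-- Lift a multiset run to an actual derivation on sentential forms. -/
lemma mrun_to_derives {m m' : N → ℕ} {σ : List P} (h : MRun lhs rhs m σ m') :
    ∀ β : List (N ⊕ T), (∀ A, β.count (Sum.inl A) = m A) →
    ∃ γ, DerivesBy lhs rhs σ β γ ∧ ∀ A, γ.count (Sum.inl A) = m' A := by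
  induction h with
  | nil m => exact fun β hβ => ⟨β, DerivesBy.refl β, hβ⟩
  | cons p hp h' ih =>
    rename_i m σ t'
    intro β hβ
    have hmem : Sum.inl (lhs p) ∈ β := by
      rw [← List.count_pos_iff, hβ (lhs p)]
      omega
    obtain ⟨l, r, rfl⟩ := List.append_of_mem hmem
    have hβ' : ∀ A, (l ++ rhs p ++ r).count (Sum.inl A) = stepFn lhs rhs m p A := by
      intro A
      have h0 := hβ A
      rw [List.count_append, List.count_cons] at h0
      rw [List.count_append, List.count_append]
      by_cases hA : lhs p = A
      · subst hA
        rw [stepFn_lhs]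
        rw [beq_self_eq_true, if_pos rfl] at h0
        unfold cntN
        omega
      · rw [stepFn_other m hA]
        have hne : (Sum.inl (lhs p) == (Sum.inl A : N ⊕ T)) = false := by
          simp [hA]
        rw [hne, if_neg (by simp)] at h0
        unfold cntN
        omega
    obtain ⟨γ, hd, hγ⟩ := ih _ hβ'
    exact ⟨γ, DerivesBy.step l r rfl rfl hd, hγ⟩

/-- Nonterminals occurring in any form derivable from `β` are reachable. -/
lemma derives_reach {x : P → ℕ} (hx1 : ∀ p, x p ≠ 0) {σ : List P}
    {β δ : List (N ⊕ T)} (h : DerivesBy lhs rhs σ β δ) :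
    ∀ A : N, Sum.inl A ∈ δ →
      ∃ B : N, Sum.inl B ∈ β ∧ Relation.ReflTransGen (EdgeRel lhs rhs x) B A := by
  induction h with
  | refl α => exact fun A hA => ⟨A, hA, Relation.ReflTransGen.refl⟩
  | step l r hα hβ h ih =>
    rename_i p α β' γ σ'
    intro A hA
    obtain ⟨B, hB, hBA⟩ := ih A hA
    rw [hβ] at hB
    rw [hα]
    rcases List.mem_append.1 hB with hB' | hr
    · rcases List.mem_append.1 hB' with hl | hmid
      · exact ⟨B, List.mem_append.2 (Or.inl hl), hBA⟩
      · refine ⟨lhs p, List.mem_append.2 (Or.inr List.mem_cons_self), ?_⟩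
        refine Relation.ReflTransGen.head ⟨p, hx1 p, rfl, ?_⟩ hBA
        unfold cntN
        rw [← List.count_pos_iff] at hmid
        omega
    · exact ⟨B, List.mem_append.2 (Or.inr (List.mem_cons_of_mem _ hr)), hBA⟩

lemma no_inl_map {l : List (N ⊕ T)} (h : ∀ A : N, Sum.inl A ∉ l) :
    ∃ w : List T, l = w.map Sum.inr := by
  induction l with
  | nil => exact ⟨[], rfl⟩
  | cons a l ih =>
    rcases a with A | b
    · exact ((h A) List.mem_cons_self).elim
    · obtain ⟨w, hw⟩ := ih (fun A hA => h A (List.mem_cons_of_mem _ hA))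
      exact ⟨b :: w, by rw [List.map_cons, hw]⟩

lemma only_terminals {S : N} {γ : List (N ⊕ T)}
    (h : ∀ A : N, γ.count (Sum.inl A) = (if A = S then 1 else 0)) :
    ∃ w₁ w₂ : List T, γ = w₁.map Sum.inr ++ Sum.inl S :: w₂.map Sum.inr := by
  have hmem : Sum.inl S ∈ γ := by
    rw [← List.count_pos_iff, h S, if_pos rfl]
    omega
  obtain ⟨l, r, rfl⟩ := List.append_of_mem hmem
  have hcnt0 : ∀ A : N, l.count (Sum.inl A) = 0 ∧ r.count (Sum.inl A) = 0 := by
    intro A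
    have h0 := h A
    rw [List.count_append, List.count_cons] at h0
    by_cases hAS : A = S
    · subst hAS
      rw [beq_self_eq_true, if_pos rfl, if_pos rfl] at h0
      omega
    · have hne : (Sum.inl S == (Sum.inl A : N ⊕ T)) = false := by
        simp
        exact fun hh => hAS hh.symm
      rw [hne, if_neg (by simp), if_neg hAS] at h0
      omega
  have hl : ∀ A : N, Sum.inl A ∉ l := by
    intro A hA
    rw [← List.count_pos_iff] at hA
    have := (hcnt0 A).1
    omega
  have hr : ∀ A : N, Sum.inl A ∉ r := by
    intro A hA
    rw [← List.count_pos_iff] at hA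
    have := (hcnt0 A).2
    omega
  obtain ⟨w₁, hw₁⟩ := no_inl_map hl
  obtain ⟨w₂, hw₂⟩ := no_inl_map hr
  exact ⟨w₁, w₂, by rw [hw₁, hw₂]⟩

end EEKAux

open EEK in
/-- If all nonterminals are useful and `x ≥ 1` solves `Φ_N·x = 0`, then some production
sequence `σ` with `Ψ_P(σ) = x` derives from `S` a sentential form `w₁.S.w₂` with
`w₁, w₂` terminal words (so the single nonterminal occurrence is `S` itself). -/
theorem homogeneous_eek_realizable
    {N T P : Type} [Fintype N] [Fintype T] [Fintype P]
    [DecidableEq N] [DecidableEq T] [DecidableEq P]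
    (lhs : P → N) (rhs : P → List (N ⊕ T)) (S : N)
    (hU : ∀ A : N, Useful lhs rhs S A)
    (x : P → ℕ) (hx1 : ∀ p : P, 1 ≤ x p)
    (hhom : ∀ A : N, phiNmul lhs rhs x A = 0) :
    ∃ σ : List P, (∀ p : P, σ.count p = x p) ∧
      ∃ w₁ w₂ : List T,
        DerivesBy lhs rhs σ [Sum.inl S]
          (w₁.map Sum.inr ++ Sum.inl S :: w₂.map Sum.inr) := by
  classical
  set m₀ : N → ℕ := fun A => if A = S then 1 else 0 with hm₀
  have hx0 : ∀ p, x p ≠ 0 := fun p => by have := hx1 p; omega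
  -- Balance
  have hbal : EEKAux.Balance lhs rhs m₀ x m₀ := by
    intro A
    have h := hhom A
    unfold phiNmul effN at h
    have h2 : (∑ p, ((x p : ℤ) * ((rhs p).count (Sum.inl A) : ℤ)))
        = ∑ p, (if lhs p = A then (x p : ℤ) else 0) := by
      have h3 : ∀ p : P, (((rhs p).count (Sum.inl A) : ℤ)
            - if lhs p = A then 1 else 0) * (x p : ℤ)
          = (x p : ℤ) * ((rhs p).count (Sum.inl A) : ℤ)
            - (if lhs p = A then (x p : ℤ) else 0) := by
        intro p
        by_cases hA : lhs p = A
        · rw [if_pos hA, if_pos hA]; ring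
        · rw [if_neg hA, if_neg hA]; ring
      rw [Finset.sum_congr rfl (fun p _ => h3 p), Finset.sum_sub_distrib] at h
      omega
    have h4 : ∑ p, x p * EEKAux.cntN rhs p A
        = ∑ p, (if lhs p = A then x p else 0) := by
      have := h2
      push_cast at this
      exact_mod_cast this
    rw [h4]
  -- Connectivity
  have hconn : EEKAux.Conn lhs rhs m₀ x := by
    intro p _
    obtain ⟨α₁, α₂, w, ⟨σd, hd⟩, -⟩ := hU (lhs p)
    have hmem : Sum.inl (lhs p) ∈ α₁ ++ Sum.inl (lhs p) :: α₂ :=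
      List.mem_append.2 (Or.inr List.mem_cons_self)
    obtain ⟨B, hB, hBA⟩ := EEKAux.derives_reach hx0 hd (lhs p) hmem
    have hBS : B = S := by
      rcases List.mem_singleton.1 hB with h
      exact Sum.inl.injEq _ _ ▸ (by injection h)
    refine ⟨S, ?_, hBS ▸ hBA⟩
    simp [hm₀]
  -- Realize
  obtain ⟨σ, hcnt, hrun⟩ := EEKAux.realize (lhs := lhs) (rhs := rhs) m₀
    (∑ p, x p) x m₀ rfl hbal hconn
  have hcount : ∀ A, ([Sum.inl S] : List (N ⊕ T)).count (Sum.inl A) = m₀ A := by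
    intro A
    rw [hm₀]
    by_cases hA : A = S
    · subst hA; simp
    · simp only [if_neg hA]
      rw [List.count_eq_zero]
      simp only [List.mem_singleton]
      exact fun hh => hA (by injection hh)
  obtain ⟨γ, hder, hγ⟩ := EEKAux.mrun_to_derives hrun [Sum.inl S] hcount
  obtain ⟨w₁, w₂, rfl⟩ := EEKAux.only_terminals (S := S) (fun A => by rw [hγ A, hm₀])
  exact ⟨σ, hcnt, w₁, w₂, hder⟩
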